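/- Let H be a complex Hadamard matrix of order n, let R₁ be a subset of its rows, and let f be a function assigning to each column a class in {1,…,t} (giving a partition of the columns into classes C₁,…,C_t). Suppose that for any two columns j and j′ with f(j) ≠ f(j′), the restrictions of these columns to the rows of R₁ are orthogonal: Σ_{i∈R₁} H_{ij} · conj(H_{ij′}) = 0. Then for any choice of complex numbers a₁,…,a_t each of absolute value 1, the matrix K defined by K_{ij} = a_{f(j)} · H_{ij} for i ∈ R₁ and K_{ij} = H_{ij} for i ∉ R₁ is a complex Hadamard matrix of order n. -/

import Mathlib

lemma aux_stmt7 {n t : ℕ} (H : Matrix (Fin n) (Fin n) ℂ)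
    (rowfact : ∀ p q : Fin n, ∑ j, H p j * (starRingEnd ℂ) (H q j)
      = if p = q then (n : ℂ) else 0)
    (R₁ : Finset (Fin n)) (f : Fin n → Fin t)
    (horth : ∀ j j' : Fin n, f j ≠ f j' →
      ∑ i ∈ R₁, H i j * (starRingEnd ℂ) (H i j') = 0)
    (a : Fin t → ℂ) (i i' : Fin n) (hi : i ∈ R₁) (hi' : i' ∉ R₁) :
    ∑ j, a (f j) * H i j * (starRingEnd ℂ) (H i' j) = 0 := by
  have hn : (n : ℂ) ≠ 0 := by
    have : 0 < n := i.pos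
    exact_mod_cast this.ne'
  -- c k j : inner product of columns k and j restricted to R₁ (conjugated form)
  set c : Fin n → Fin n → ℂ :=
    fun k j => ∑ i'' ∈ R₁, (starRingEnd ℂ) (H i'' k) * H i'' j with hc
  have hcomm : ∀ k j, a (f j) * c k j = a (f k) * c k j := by
    intro k j
    by_cases h : f j = f k
    · rw [h]
    · have hz : c k j = 0 := by
        have := horth k j (fun hh => h hh.symm)
        have hconj := congrArg (starRingEnd ℂ) this
        rw [map_sum, map_zero] at hconj
        simpa [hc, map_mul, mul_comm] using hconj
      rw [hz, mul_zero, mul_zero]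
  have step1 : ∀ j, (n : ℂ) * H i j
      = ∑ i'' ∈ R₁, (∑ k, H i k * (starRingEnd ℂ) (H i'' k)) * H i'' j := by
    intro j
    have h1 : ∑ i'' ∈ R₁, (∑ k, H i k * (starRingEnd ℂ) (H i'' k)) * H i'' j
        = ∑ i'' ∈ R₁, (if i = i'' then (n : ℂ) else 0) * H i'' j := by
      refine Finset.sum_congr rfl fun i'' _ => ?_
      rw [rowfact]
    rw [h1]
    simp [Finset.sum_ite_eq, hi]
  have key : (n : ℂ) * ∑ j, a (f j) * H i j * (starRingEnd ℂ) (H i' j) = 0 := by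
    calc (n : ℂ) * ∑ j, a (f j) * H i j * (starRingEnd ℂ) (H i' j)
        = ∑ j, a (f j) * ((n : ℂ) * H i j) * (starRingEnd ℂ) (H i' j) := by
          rw [Finset.mul_sum]; refine Finset.sum_congr rfl fun j _ => by ring
      _ = ∑ j, a (f j) * (∑ i'' ∈ R₁, (∑ k, H i k * (starRingEnd ℂ) (H i'' k)) * H i'' j)
            * (starRingEnd ℂ) (H i' j) := by
          refine Finset.sum_congr rfl fun j _ => by rw [← step1 j]
      _ = ∑ j, ∑ k, (H i k * (a (f j) * c k j)) * (starRingEnd ℂ) (H i' j) := by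
          refine Finset.sum_congr rfl fun j _ => ?_
          simp only [hc, Finset.mul_sum, Finset.sum_mul]
          rw [Finset.sum_comm]
          exact Finset.sum_congr rfl fun k _ => Finset.sum_congr rfl fun i'' _ => by ring
      _ = ∑ k, (H i k * a (f k)) * ∑ j, c k j * (starRingEnd ℂ) (H i' j) := by
          rw [Finset.sum_comm]
          refine Finset.sum_congr rfl fun k _ => ?_
          rw [Finset.mul_sum]
          refine Finset.sum_congr rfl fun j _ => ?_
          rw [hcomm k j]; ring
      _ = ∑ k, (H i k * a (f k)) * ∑ i'' ∈ R₁, (starRingEnd ℂ) (H i'' k)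
            * ∑ j, H i'' j * (starRingEnd ℂ) (H i' j) := by
          refine Finset.sum_congr rfl fun k _ => ?_
          congr 1
          simp only [hc, Finset.sum_mul, Finset.mul_sum]
          rw [Finset.sum_comm]
          exact Finset.sum_congr rfl fun i'' _ => Finset.sum_congr rfl fun j _ => by ring
      _ = 0 := by
          refine Finset.sum_eq_zero fun k _ => ?_
          have : ∑ i'' ∈ R₁, (starRingEnd ℂ) (H i'' k)
              * ∑ j, H i'' j * (starRingEnd ℂ) (H i' j) = 0 := by
            refine Finset.sum_eq_zero fun i'' hi'' => ?_
            rw [rowfact]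
            have : i'' ≠ i' := fun h => hi' (h ▸ hi'')
            simp [this]
          rw [this, mul_zero]
  exact (mul_eq_zero.mp key).resolve_left hn

/-- Conditions for rank 1 switchings of complex Hadamard matrices: if columns from
distinct classes of the partition `C₁,…,C_t` (given by `f`) restrict to orthogonal vectors
on the rows of `R₁`, then multiplying, within the rows of `R₁`, each column class `C_l` by
a unimodular constant `a l` yields a complex Hadamard matrix. -/
theorem stmt_7 (n t : ℕ) (H : Matrix (Fin n) (Fin n) ℂ)
    (hent : ∀ i j, ‖H i j‖ = 1)
    (hHad : H * H.conjTranspose = (n : ℂ) • 1)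
    (R₁ : Finset (Fin n)) (f : Fin n → Fin t)
    (horth : ∀ j j' : Fin n, f j ≠ f j' →
      ∑ i ∈ R₁, H i j * (starRingEnd ℂ) (H i j') = 0)
    (a : Fin t → ℂ) (ha : ∀ l, ‖a l‖ = 1)
    (K : Matrix (Fin n) (Fin n) ℂ)
    (hK : ∀ i j, K i j = if i ∈ R₁ then a (f j) * H i j else H i j) :
    (∀ i j, ‖K i j‖ = 1) ∧ K * K.conjTranspose = (n : ℂ) • 1 := by
  have rowfact : ∀ p q : Fin n, ∑ j, H p j * (starRingEnd ℂ) (H q j)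
      = if p = q then (n : ℂ) else 0 := by
    intro p q
    have := congrFun (congrFun hHad p) q
    simpa [Matrix.mul_apply, Matrix.conjTranspose_apply, Matrix.one_apply,
      Matrix.smul_apply, mul_ite] using this
  have haunit : ∀ l, a l * (starRingEnd ℂ) (a l) = 1 := by
    intro l
    rw [Complex.mul_conj]
    norm_cast
    rw [Complex.normSq_eq_norm_sq, ha l, one_pow]
  constructor
  · intro i j
    rw [hK]
    split
    · rw [norm_mul, ha, hent, one_mul]
    · exact hent i j
  · ext i i'
    have hKK : (K * K.conjTranspose) i i' = ∑ j, K i j * (starRingEnd ℂ) (K i' j) := by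
      simp [Matrix.mul_apply, Matrix.conjTranspose_apply]
    rw [hKK]
    have hrhs : ((n : ℂ) • (1 : Matrix (Fin n) (Fin n) ℂ)) i i'
        = if i = i' then (n : ℂ) else 0 := by
      simp [Matrix.smul_apply, Matrix.one_apply, mul_ite]
    rw [hrhs]
    by_cases hi : i ∈ R₁ <;> by_cases hi' : i' ∈ R₁
    · -- both in R₁
      have : ∑ j, K i j * (starRingEnd ℂ) (K i' j)
          = ∑ j, H i j * (starRingEnd ℂ) (H i' j) := by
        refine Finset.sum_congr rfl fun j _ => ?_
        rw [hK, hK, if_pos hi, if_pos hi', map_mul]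
        calc a (f j) * H i j * ((starRingEnd ℂ) (a (f j)) * (starRingEnd ℂ) (H i' j))
            = (a (f j) * (starRingEnd ℂ) (a (f j))) * (H i j * (starRingEnd ℂ) (H i' j)) := by
              ring
          _ = H i j * (starRingEnd ℂ) (H i' j) := by rw [haunit, one_mul]
      rw [this, rowfact]
    · -- i ∈ R₁, i' ∉ R₁ : i ≠ i'
      have hne : i ≠ i' := fun h => hi' (h ▸ hi)
      rw [if_neg hne]
      have : ∑ j, K i j * (starRingEnd ℂ) (K i' j)
          = ∑ j, a (f j) * H i j * (starRingEnd ℂ) (H i' j) := by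
        refine Finset.sum_congr rfl fun j _ => ?_
        rw [hK, hK, if_pos hi, if_neg hi']
      rw [this]
      exact aux_stmt7 H rowfact R₁ f horth a i i' hi hi'
    · -- i ∉ R₁, i' ∈ R₁
      have hne : i ≠ i' := fun h => hi (h ▸ hi')
      rw [if_neg hne]
      have hz : ∑ j, a (f j) * H i' j * (starRingEnd ℂ) (H i j) = 0 :=
        aux_stmt7 H rowfact R₁ f horth a i' i hi' hi
      have : ∑ j, K i j * (starRingEnd ℂ) (K i' j)
          = (starRingEnd ℂ) (∑ j, a (f j) * H i' j * (starRingEnd ℂ) (H i j)) := by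
        rw [map_sum]
        refine Finset.sum_congr rfl fun j _ => ?_
        rw [hK, hK, if_neg hi, if_pos hi']
        simp only [map_mul, Complex.conj_conj]
        ring
      rw [this, hz, map_zero]
    · -- neither in R₁
      have : ∑ j, K i j * (starRingEnd ℂ) (K i' j)
          = ∑ j, H i j * (starRingEnd ℂ) (H i' j) := by
        refine Finset.sum_congr rfl fun j _ => ?_
        rw [hK, hK, if_neg hi, if_neg hi']
      rw [this, rowfact]
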